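/- Let V be a type of variables with a constraint system (P, N, S), and let M : V → ZFSet be an assignment that models the whole system (P, N, S). Then there exists an assignment T : V → ZFSet such that the pair (M, T) satisfies all the Ξ-conditions (i)–(v) for (P, N, S). (In particular, T can be taken as T v = {M x | x : V, M x ∈⁺ M v}, where ∈⁺ is the transitive closure of membership on the values of M.) -/

import Mathlib

/-- `M` models the positive literals `a = b \ c` in `P` and the negative literals
`a ≠ b \ c` in `N`. -/
def ModelsLits {V : Type*} (P N : Finset (V × V × V)) (M : V → ZFSet) : Prop :=
  (∀ t ∈ P, M t.1 = M t.2.1 \ M t.2.2) ∧ (∀ t ∈ N, M t.1 ≠ M t.2.1 \ M t.2.2)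

/-- `M` models the whole constraint system `(P, N, S)`. -/
def ModelsSystem {V : Type*} (P N : Finset (V × V × V)) (S : Finset (V × V))
    (M : V → ZFSet) : Prop :=
  ModelsLits P N M ∧ ∀ p ∈ S, M p.1 = {M p.2}

/-- The pair of assignments `(M, T)` satisfies the Ξ-conditions for the
constraint system `(P, N, S)`. -/
def XiConditions {V : Type*} (S : Finset (V × V)) (M T : V → ZFSet) : Prop :=
  (∀ p ∈ S, ¬ M p.1 ⊆ M p.2) ∧
  (∀ p ∈ S, ∀ q ∈ S, (M p.2 = M q.2 ↔ M p.1 = M q.1)) ∧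
  (∀ p ∈ S, ∀ v : V, M p.1 ∩ M v ≠ ∅ → M p.1 ⊆ M v) ∧
  (∀ p ∈ S, ∀ v : V, M p.1 ∩ M v ≠ ∅ → T p.2 ⊆ T v ∧ T p.2 ≠ T v) ∧
  (∀ u v : V, M u = M v → T u = T v)

open Classical in
/-- The modified assignment `M_{x,y}`. -/
noncomputable def modifyAssign {V : Type*} (M : V → ZFSet) (x y : V) : V → ZFSet :=
  fun v => if M x ∩ M v = ∅ then M v else (M v \ M x) ∪ {M y}

universe u

/-- The von Neumann-style map from ordinals to ZFC sets. -/
noncomputable def ordToZF : Ordinal.{u} → ZFSet.{u}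
  | o => ZFSet.range fun i : o.ToType => ordToZF ((@Ordinal.ToType.mk o).symm i).1
termination_by o => o
decreasing_by exact ((@Ordinal.ToType.mk o).symm i).2

theorem mem_ordToZF {x : ZFSet.{u}} {o : Ordinal.{u}} :
    x ∈ ordToZF o ↔ ∃ p < o, x = ordToZF p := by
  rw [ordToZF, ZFSet.mem_range]
  constructor
  · rintro ⟨i, rfl⟩
    exact ⟨_, ((@Ordinal.ToType.mk o).symm i).2, rfl⟩
  · rintro ⟨p, hp, rfl⟩
    refine ⟨(@Ordinal.ToType.mk o) ⟨p, hp⟩, ?_⟩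
    simp

theorem ordToZF_mem {p o : Ordinal.{u}} (h : p < o) : ordToZF p ∈ ordToZF o :=
  mem_ordToZF.2 ⟨p, h, rfl⟩

theorem ordToZF_subset {p o : Ordinal.{u}} (h : p < o) : ordToZF p ⊆ ordToZF o := by
  intro x hx
  obtain ⟨q, hq, rfl⟩ := mem_ordToZF.1 hx
  exact ordToZF_mem (hq.trans h)

theorem ordToZF_ne {p o : Ordinal.{u}} (h : p < o) : ordToZF p ≠ ordToZF o := by
  intro he
  exact ZFSet.mem_irrefl _ (he ▸ ordToZF_mem h)

theorem singleton_inter_ne_empty {a : ZFSet} {v : ZFSet}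
    (h : ({a} : ZFSet) ∩ v ≠ ∅) : a ∈ v := by
  have hy : ∃ y, y ∈ ({a} : ZFSet) ∩ v := by
    by_contra hc
    push_neg at hc
    exact h ((ZFSet.eq_empty _).2 hc)
  obtain ⟨y, hy⟩ := hy
  rw [ZFSet.mem_inter, ZFSet.mem_singleton] at hy
  exact hy.1 ▸ hy.2

theorem system_model_extends_to_xi {V : Type*}
    (P N : Finset (V × V × V)) (S : Finset (V × V))
    (M : V → ZFSet) (hM : ModelsSystem P N S M) :
    ∃ T : V → ZFSet, XiConditions S M T := by
  classical
  obtain ⟨-, hS⟩ := hM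
  set cnt : V → ℕ := fun v =>
    (S.filter fun p => ZFSet.rank (M p.2) < ZFSet.rank (M v)).card with hcnt
  have hcnt_lt : ∀ q ∈ S, ∀ v : V, M q.2 ∈ M v → cnt q.2 < cnt v := by
    intro q hq v hmem
    have hr : ZFSet.rank (M q.2) < ZFSet.rank (M v) := ZFSet.rank_lt_of_mem hmem
    apply Finset.card_lt_card
    constructor
    · intro p hp
      rw [Finset.mem_filter] at hp ⊢
      exact ⟨hp.1, hp.2.trans hr⟩
    · intro hsub
      have hqmem : q ∈ S.filter fun p => ZFSet.rank (M p.2) < ZFSet.rank (M v) :=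
        Finset.mem_filter.2 ⟨hq, hr⟩
      have := Finset.mem_filter.1 (hsub hqmem)
      exact lt_irrefl _ this.2
  refine ⟨fun v => ordToZF (cnt v), ?_, ?_, ?_, ?_, ?_⟩
  · intro p hp hsub
    rw [hS p hp] at hsub
    exact ZFSet.mem_irrefl _ (hsub (ZFSet.mem_singleton.2 rfl))
  · intro p hp q hq
    rw [hS p hp, hS q hq]
    constructor
    · intro h; rw [h]
    · intro h
      have := ZFSet.mem_singleton.1 (h ▸ ZFSet.mem_singleton.2 (rfl : M p.2 = M p.2))
      exact this
  · intro p hp v hne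
    rw [hS p hp] at hne ⊢
    intro y hy
    rw [ZFSet.mem_singleton] at hy
    exact hy ▸ singleton_inter_ne_empty hne
  · intro p hp v hne
    rw [hS p hp] at hne
    have hmem : M p.2 ∈ M v := singleton_inter_ne_empty hne
    have hlt : (cnt p.2 : Ordinal) < (cnt v : Ordinal) := by
      exact_mod_cast hcnt_lt p hp v hmem
    exact ⟨ordToZF_subset hlt, ordToZF_ne hlt⟩
  · intro u v h
    have : cnt u = cnt v := by
      simp only [hcnt, h]
    simp only [this]
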